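/- Let M and N be HPTP linear maps on M_d(ℂ). Then the physical implementability is subadditive under composition: ν(M ∘ N) ≤ ν(M) + ν(N), equivalently 2^{ν(M ∘ N)} ≤ 2^{ν(M)} · 2^{ν(N)}. -/

import Mathlib

open scoped Kronecker ComplexOrder
open Matrix

noncomputable section

/-- `id_k ⊗ N` applied blockwise. -/
def idTensor {n m : Type*} (k : Type*)
    (N : Matrix n n ℂ → Matrix m m ℂ)
    (M : Matrix (k × n) (k × n) ℂ) : Matrix (k × m) (k × m) ℂ :=
  Matrix.of fun p q => N (Matrix.of fun a b => M (p.1, a) (q.1, b)) p.2 q.2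

/-- Trace-preserving. -/
def IsTP {n m : Type*} [Fintype n] [Fintype m]
    (N : Matrix n n ℂ → Matrix m m ℂ) : Prop :=
  ∀ X, (N X).trace = X.trace

/-- Hermitian-preserving. -/
def IsHP {n m : Type*} (N : Matrix n n ℂ → Matrix m m ℂ) : Prop :=
  ∀ X, X.IsHermitian → (N X).IsHermitian

/-- Completely positive: for every `k`, `id_k ⊗ N` preserves positive semidefiniteness. -/
def IsCP {n m : Type*} [Fintype n] [Fintype m]
    (N : Matrix n n ℂ → Matrix m m ℂ) : Prop :=
  ∀ (k : ℕ) (M : Matrix (Fin k × n) (Fin k × n) ℂ),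
    M.PosSemidef → (idTensor (Fin k) N M).PosSemidef

/-- Completely positive and trace-preserving (quantum channel). -/
def IsCPTP {n m : Type*} [Fintype n] [Fintype m]
    (N : Matrix n n ℂ → Matrix m m ℂ) : Prop :=
  IsLinearMap ℂ N ∧ IsCP N ∧ IsTP N

/-- Completely positive and trace non-increasing. -/
def IsCPTN {n m : Type*} [Fintype n] [Fintype m]
    (N : Matrix n n ℂ → Matrix m m ℂ) : Prop :=
  IsLinearMap ℂ N ∧ IsCP N ∧ ∀ X : Matrix n n ℂ, X.PosSemidef → (N X).trace ≤ X.trace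

/-- Costs of finite quasiprobability decompositions of `N` into CPTP maps. -/
def decompCosts {n m : Type*} [Fintype n] [Fintype m]
    (N : Matrix n n ℂ → Matrix m m ℂ) : Set ℝ :=
  { c | ∃ (s : ℕ) (η : Fin s → ℝ) (O : Fin s → (Matrix n n ℂ → Matrix m m ℂ)),
      (∀ i, IsCPTP (O i)) ∧ (∀ X, N X = ∑ i, (η i : ℂ) • O i X) ∧ c = ∑ i, |η i| }

/-- The physical implementability `ν(N)`. -/
noncomputable def nu {n m : Type*} [Fintype n] [Fintype m]
    (N : Matrix n n ℂ → Matrix m m ℂ) : ℝ :=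
  Real.logb 2 (sInf (decompCosts N))

/-- The Choi matrix of a linear map. -/
def choiMatrix {n m : Type*} [DecidableEq n]
    (N : Matrix n n ℂ → Matrix m m ℂ) : Matrix (n × m) (n × m) ℂ :=
  Matrix.of fun p q => N (Matrix.single p.1 q.1 1) p.2 q.2

/-- Partial trace over the second tensor factor. -/
def ptraceB {n m : Type*} [Fintype m] (J : Matrix (n × m) (n × m) ℂ) :
    Matrix n n ℂ :=
  Matrix.of fun i j => ∑ a, J (i, a) (j, a)

/-- The trace norm of a matrix. -/
noncomputable def traceNorm {k : Type*} [Fintype k] [DecidableEq k]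
    (X : Matrix k k ℂ) : ℝ :=
  (((Matrix.posSemidef_conjTranspose_mul_self X).1.eigenvectorUnitary : Matrix k k ℂ) *
    Matrix.diagonal (((↑) : ℝ → ℂ) ∘ (Real.sqrt ·) ∘ (Matrix.posSemidef_conjTranspose_mul_self X).1.eigenvalues) *
    (star ((Matrix.posSemidef_conjTranspose_mul_self X).1.eigenvectorUnitary : Matrix k k ℂ))).trace.re

/-- Tensor product of two maps. -/
def tensorMap {n₁ n₂ m₂ : Type*} [Fintype n₁] [DecidableEq n₁]
    (M : Matrix n₁ n₁ ℂ → Matrix n₁ n₁ ℂ) (N : Matrix n₂ n₂ ℂ → Matrix m₂ m₂ ℂ)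
    (X : Matrix (n₁ × n₂) (n₁ × n₂) ℂ) : Matrix (n₁ × m₂) (n₁ × m₂) ℂ :=
  ∑ i : n₁, ∑ j : n₁,
    (M (Matrix.single i j 1)) ⊗ₖ (N (Matrix.of fun a b => X (i, a) (j, b)))


namespace NuAux

variable {n m : Type*}

/-- The map determined by a Choi matrix. -/
def mapOfChoi [Fintype n] (J : Matrix (n × m) (n × m) ℂ) (X : Matrix n n ℂ) :
    Matrix m m ℂ :=
  Matrix.of fun a b => ∑ i, ∑ j, X i j * J (i, a) (j, b)

lemma isLinearMap_mapOfChoi [Fintype n] (J : Matrix (n × m) (n × m) ℂ) :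
    IsLinearMap ℂ (mapOfChoi J) := by
  constructor
  · intro X Y
    ext a b
    simp [mapOfChoi, add_mul, Finset.sum_add_distrib]
  · intro c X
    ext a b
    simp [mapOfChoi, Finset.mul_sum, mul_assoc]

lemma mapOfChoi_add_left [Fintype n] (J K : Matrix (n × m) (n × m) ℂ) (X : Matrix n n ℂ) :
    mapOfChoi (J + K) X = mapOfChoi J X + mapOfChoi K X := by
  ext a b
  simp [mapOfChoi, mul_add, Finset.sum_add_distrib]

lemma mapOfChoi_smul_left [Fintype n] (c : ℂ) (J : Matrix (n × m) (n × m) ℂ) (X : Matrix n n ℂ) :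
    mapOfChoi (c • J) X = c • mapOfChoi J X := by
  ext a b
  simp [mapOfChoi, Finset.mul_sum, mul_left_comm]

lemma sum4_swap {α β γ δ M : Type*} [Fintype α] [Fintype β] [Fintype γ] [Fintype δ]
    [AddCommMonoid M] (f : α → β → γ → δ → M) :
    ∑ i, ∑ j, ∑ s, ∑ t, f i j s t = ∑ s, ∑ t, ∑ i, ∑ j, f i j s t := by
  calc ∑ i, ∑ j, ∑ s, ∑ t, f i j s t
      = ∑ i, ∑ s, ∑ j, ∑ t, f i j s t :=
        Finset.sum_congr rfl fun i _ => Finset.sum_comm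
    _ = ∑ s, ∑ i, ∑ j, ∑ t, f i j s t := Finset.sum_comm
    _ = ∑ s, ∑ i, ∑ t, ∑ j, f i j s t :=
        Finset.sum_congr rfl fun s _ => Finset.sum_congr rfl fun i _ => Finset.sum_comm
    _ = ∑ s, ∑ t, ∑ i, ∑ j, f i j s t :=
        Finset.sum_congr rfl fun s _ => Finset.sum_comm

lemma isCP_mapOfChoi [Fintype n] [Fintype m]
    {J : Matrix (n × m) (n × m) ℂ} (hJ : J.PosSemidef) : IsCP (mapOfChoi J) := by
  intro k M hM
  obtain ⟨B, hB⟩ : ∃ B : Matrix (n × m) (n × m) ℂ, J = Bᴴ * B := by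
    classical
    open scoped Matrix.Norms.L2Operator MatrixOrder in
    exact CStarAlgebra.nonneg_iff_eq_star_mul_self.mp hJ.nonneg
  obtain ⟨A, hA⟩ : ∃ A : Matrix (Fin k × n) (Fin k × n) ℂ, M = Aᴴ * A := by
    classical
    open scoped Matrix.Norms.L2Operator MatrixOrder in
    exact CStarAlgebra.nonneg_iff_eq_star_mul_self.mp hM.nonneg
  set D : Matrix ((Fin k × n) × (n × m)) (Fin k × m) ℂ :=
    Matrix.of (fun st q => ∑ j, A st.1 (q.1, j) * B st.2 (j, q.2)) with hD
  have hMe : ∀ p' q', M p' q' = ∑ s, star (A s p') * A s q' := by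
    intro p' q'; rw [hA]; simp [Matrix.mul_apply, Matrix.conjTranspose_apply]
  have hJe : ∀ p' q', J p' q' = ∑ t, star (B t p') * B t q' := by
    intro p' q'; rw [hB]; simp [Matrix.mul_apply, Matrix.conjTranspose_apply]
  have key : idTensor (Fin k) (mapOfChoi J) M = Dᴴ * D := by
    ext p q
    calc (idTensor (Fin k) (mapOfChoi J) M) p q
        = ∑ i, ∑ j, ∑ s, ∑ t,
            (star (A s (p.1, i)) * star (B t (i, p.2))) * (A s (q.1, j) * B t (j, q.2)) := by
          simp only [idTensor, mapOfChoi, Matrix.of_apply]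
          refine Finset.sum_congr rfl fun i _ => Finset.sum_congr rfl fun j _ => ?_
          rw [hMe, hJe, Finset.sum_mul_sum]
          exact Finset.sum_congr rfl fun s _ => Finset.sum_congr rfl fun t _ => by ring
      _ = ∑ s, ∑ t, ∑ i, ∑ j,
            (star (A s (p.1, i)) * star (B t (i, p.2))) * (A s (q.1, j) * B t (j, q.2)) :=
          sum4_swap _
      _ = (Dᴴ * D) p q := by
          rw [Matrix.mul_apply]
          rw [show ∑ st : (Fin k × n) × (n × m), (Dᴴ) p st * D st q
              = ∑ s : Fin k × n, ∑ t : n × m, (Dᴴ) p (s, t) * D (s, t) q from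
            Fintype.sum_prod_type _]
          refine Finset.sum_congr rfl fun s _ => Finset.sum_congr rfl fun t _ => ?_
          simp only [Matrix.conjTranspose_apply, hD, Matrix.of_apply, star_sum, star_mul']
          exact (Finset.sum_mul_sum _ _ _ _).symm
  rw [key]
  exact posSemidef_conjTranspose_mul_self D

lemma mapOfChoi_choiMatrix [Fintype n] [DecidableEq n]
    {M : Matrix n n ℂ → Matrix m m ℂ} (h : IsLinearMap ℂ M) (X : Matrix n n ℂ) :
    mapOfChoi (choiMatrix M) X = M X := by
  have hX : M X = ∑ i, ∑ j, X i j • M (Matrix.single i j 1) := by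
    have hL : ∀ Y, M Y = (IsLinearMap.mk' M h) Y := fun Y => rfl
    conv_lhs => rw [matrix_eq_sum_single X]
    rw [hL, map_sum]
    refine Finset.sum_congr rfl fun i _ => ?_
    rw [map_sum]
    refine Finset.sum_congr rfl fun j _ => ?_
    rw [show Matrix.single i j (X i j) = X i j • Matrix.single i j (1:ℂ) by
      rw [smul_single, smul_eq_mul, mul_one]]
    rw [_root_.map_smul]
    rfl
  ext a b
  rw [hX]
  simp [mapOfChoi, choiMatrix, Matrix.sum_apply, Matrix.smul_apply, smul_eq_mul]

lemma conjTranspose_map_stdBasis [Fintype n] [DecidableEq n]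
    {M : Matrix n n ℂ → Matrix m m ℂ}
    (hlin : IsLinearMap ℂ M) (hHP : IsHP M) (i j : n) :
    (M (Matrix.single i j 1))ᴴ = M (Matrix.single j i 1) := by
  set E := Matrix.single i j (1:ℂ) with hE
  set F := Matrix.single j i (1:ℂ) with hF
  have hEF : Eᴴ = F := by
    ext a b
    simp only [hE, hF, Matrix.conjTranspose_apply, Matrix.single, Matrix.of_apply]
    split_ifs with h1 h2 h2 <;> simp_all [and_comm]
  have hFE : Fᴴ = E := by
    ext a b
    simp only [hE, hF, Matrix.conjTranspose_apply, Matrix.single, Matrix.of_apply]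
    split_ifs with h1 h2 h2 <;> simp_all [and_comm]
  have h1 : (M E + M F).IsHermitian := by
    have h := hHP (E + F) (by rw [Matrix.IsHermitian, conjTranspose_add, hEF, hFE, add_comm])
    rwa [hlin.map_add] at h
  have h2 : (Complex.I • M E - Complex.I • M F).IsHermitian := by
    have hH : (Complex.I • E - Complex.I • F).IsHermitian := by
      rw [Matrix.IsHermitian, conjTranspose_sub, conjTranspose_smul, conjTranspose_smul,
        hEF, hFE, show star Complex.I = -Complex.I from by
          simp [Complex.star_def, Complex.conj_I]]
      module
    have h := hHP _ hH
    rwa [hlin.map_sub, hlin.map_smul, hlin.map_smul] at h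
  ext a b
  rw [Matrix.conjTranspose_apply]
  have e1 := h1.apply a b
  have e2 := h2.apply a b
  simp only [Matrix.add_apply, Matrix.sub_apply, Matrix.smul_apply, smul_eq_mul, star_add,
    star_sub, star_mul', Complex.star_def, Complex.conj_I, _root_.map_mul] at e1 e2
  have e2' := congrArg (fun z => Complex.I * z) e2
  simp only [mul_sub, mul_neg, ← mul_assoc, Complex.I_mul_I, neg_neg, neg_mul, one_mul] at e2'
  simp only [Complex.star_def]
  linear_combination e1 / 2 + e2' / 2

lemma choiMatrix_isHermitian [Fintype n] [DecidableEq n]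
    {M : Matrix n n ℂ → Matrix m m ℂ}
    (hlin : IsLinearMap ℂ M) (hHP : IsHP M) : (choiMatrix M).IsHermitian := by
  rw [Matrix.IsHermitian]
  ext p q
  rw [Matrix.conjTranspose_apply]
  show star (choiMatrix M q p) = choiMatrix M p q
  show star (M (Matrix.single q.1 p.1 1) q.2 p.2) = M (Matrix.single p.1 q.1 1) p.2 q.2
  calc star (M (Matrix.single q.1 p.1 1) q.2 p.2)
      = (M (Matrix.single q.1 p.1 1))ᴴ p.2 q.2 := rfl
    _ = M (Matrix.single p.1 q.1 1) p.2 q.2 := by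
        rw [conjTranspose_map_stdBasis hlin hHP]

lemma exists_shift {k : Type*} [Fintype k] [DecidableEq k] {J : Matrix k k ℂ}
    (hJ : J.IsHermitian) : ∃ C : ℝ, 0 ≤ C ∧ (J + (C : ℂ) • 1).PosSemidef := by
  refine ⟨∑ i, |hJ.eigenvalues i|, Finset.sum_nonneg fun i _ => abs_nonneg _, ?_⟩
  set C := ∑ i, |hJ.eigenvalues i| with hC
  set U : Matrix k k ℂ := (hJ.eigenvectorUnitary : Matrix k k ℂ) with hU
  have hUU : U * star U = 1 := Matrix.mem_unitaryGroup_iff.mp hJ.eigenvectorUnitary.2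
  have key : J + (C:ℂ) • 1 =
      U * Matrix.diagonal (fun i => ((hJ.eigenvalues i + C : ℝ) : ℂ)) * Uᴴ := by
    conv_lhs => rw [hJ.spectral_theorem, ← hUU]
    rw [Matrix.star_eq_conjTranspose]
    have hdiag : Matrix.diagonal (fun i => ((hJ.eigenvalues i + C : ℝ) : ℂ)) =
        Matrix.diagonal (RCLike.ofReal ∘ hJ.eigenvalues) + (C:ℂ) • 1 := by
      ext a b
      by_cases h : a = b
      · subst h
        simp only [Matrix.diagonal_apply_eq, Matrix.add_apply, Matrix.smul_apply,
          Matrix.one_apply_eq, smul_eq_mul, mul_one, Function.comp_apply]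
        show ((hJ.eigenvalues a + C : ℝ) : ℂ) = ((hJ.eigenvalues a : ℝ) : ℂ) + ((C : ℝ) : ℂ)
        push_cast
        ring
      · simp [Matrix.diagonal_apply_ne _ h, Matrix.one_apply_ne h]
    rw [hdiag, Matrix.mul_add, Matrix.add_mul]
    congr 1
    rw [mul_smul_comm, Matrix.mul_one, smul_mul_assoc]
  rw [key]
  refine Matrix.PosSemidef.mul_mul_conjTranspose_same ?_ U
  refine Matrix.posSemidef_diagonal_iff.mpr fun i => ?_
  rw [Complex.zero_le_real]
  have habs : |hJ.eigenvalues i| ≤ C :=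
    Finset.single_le_sum (f := fun i => |hJ.eigenvalues i|) (fun _ _ => abs_nonneg _)
      (Finset.mem_univ i)
  have := neg_abs_le (hJ.eigenvalues i)
  linarith

lemma posSemidef_ofReal_smul {k : Type*} [Fintype k] {A : Matrix k k ℂ}
    (hA : A.PosSemidef) {r : ℝ} (hr : 0 ≤ r) : ((r:ℂ) • A).PosSemidef := by
  constructor
  · rw [Matrix.IsHermitian, Matrix.conjTranspose_smul, hA.1.eq]
    congr 1
    simp [Complex.star_def, Complex.conj_ofReal]
  · exact (hA.smul (Complex.zero_le_real.mpr hr)).2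

lemma trace_mapOfChoi [Fintype n] [Fintype m] (J : Matrix (n × m) (n × m) ℂ)
    (X : Matrix n n ℂ) :
    (mapOfChoi J X).trace = ∑ i, ∑ j, X i j * ∑ a, J (i, a) (j, a) := by
  simp only [Matrix.trace, Matrix.diag_apply, mapOfChoi, Matrix.of_apply, Finset.mul_sum]
  rw [Finset.sum_comm]
  exact Finset.sum_congr rfl fun i _ => Finset.sum_comm

lemma trace_mapOfChoi_choiMatrix [Fintype n] [Fintype m] [DecidableEq n]
    {M : Matrix n n ℂ → Matrix m m ℂ} (hTP : IsTP M) (X : Matrix n n ℂ) :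
    (mapOfChoi (choiMatrix M) X).trace = X.trace := by
  rw [trace_mapOfChoi]
  have key : ∀ i j : n, (∑ a, choiMatrix M (i,a) (j,a)) = if i = j then (1:ℂ) else 0 := by
    intro i j
    have h : (∑ a, choiMatrix M (i,a) (j,a)) = (M (Matrix.single i j 1)).trace := by
      simp [choiMatrix, Matrix.trace, Matrix.diag]
    rw [h, hTP]
    by_cases hij : i = j
    · subst hij; simp
    · simp [Matrix.trace_single_eq_of_ne i j (1:ℂ) hij, hij]
  simp only [key, mul_ite, mul_one, mul_zero]
  rw [Matrix.trace]
  simp [Matrix.diag, Finset.sum_ite_eq]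

lemma trace_mapOfChoi_one {d : ℕ} (X : Matrix (Fin d) (Fin d) ℂ) :
    (mapOfChoi (1 : Matrix (Fin d × Fin d) (Fin d × Fin d) ℂ) X).trace
      = (d:ℂ) * X.trace := by
  rw [trace_mapOfChoi]
  have key : ∀ i j : Fin d,
      (∑ a : Fin d, (1 : Matrix (Fin d × Fin d) (Fin d × Fin d) ℂ) (i,a) (j,a))
        = if i = j then (d:ℂ) else 0 := by
    intro i j
    by_cases hij : i = j
    · subst hij; simp [Matrix.one_apply]
    · simp [Matrix.one_apply, Prod.ext_iff, hij]
  simp only [key, mul_ite, mul_zero]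
  rw [Matrix.trace]
  simp only [Matrix.diag_apply, Finset.sum_ite_eq, Finset.mem_univ, if_true]
  rw [Finset.mul_sum]
  exact Finset.sum_congr rfl fun i _ => by ring

end NuAux

lemma IsCPTP.comp {n₁ n₂ n₃ : Type*} [Fintype n₁] [Fintype n₂] [Fintype n₃]
    {f : Matrix n₂ n₂ ℂ → Matrix n₃ n₃ ℂ} {g : Matrix n₁ n₁ ℂ → Matrix n₂ n₂ ℂ}
    (hf : IsCPTP f) (hg : IsCPTP g) : IsCPTP (f ∘ g) := by
  obtain ⟨hf1, hf2, hf3⟩ := hf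
  obtain ⟨hg1, hg2, hg3⟩ := hg
  refine ⟨⟨fun x y => ?_, fun c x => ?_⟩, ?_, ?_⟩
  · simp [Function.comp, hg1.map_add, hf1.map_add]
  · simp [Function.comp, hg1.map_smul, hf1.map_smul]
  · intro k X hX
    have h : idTensor (Fin k) (f ∘ g) X = idTensor (Fin k) f (idTensor (Fin k) g X) := rfl
    rw [h]
    exact hf2 k _ (hg2 k _ hX)
  · intro X
    show (f (g X)).trace = X.trace
    rw [hf3, hg3]

lemma nonneg_of_mem_decompCosts {n m : Type*} [Fintype n] [Fintype m]
    {L : Matrix n n ℂ → Matrix m m ℂ} {c : ℝ} (hc : c ∈ decompCosts L) : 0 ≤ c := by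
  obtain ⟨s, η, O, -, -, rfl⟩ := hc
  exact Finset.sum_nonneg fun i _ => abs_nonneg _

lemma one_le_of_mem_decompCosts {d : ℕ} (hd : 0 < d)
    {L : Matrix (Fin d) (Fin d) ℂ → Matrix (Fin d) (Fin d) ℂ} (hTP : IsTP L)
    {c : ℝ} (hc : c ∈ decompCosts L) : 1 ≤ c := by
  obtain ⟨s, η, O, hO, hrep, rfl⟩ := hc
  set i0 : Fin d := ⟨0, hd⟩
  have h1 : (1:ℂ) = ∑ i, (η i : ℂ) := by
    have h := congrArg Matrix.trace (hrep (Matrix.single i0 i0 1))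
    rw [hTP, Matrix.trace_single_eq_same, Matrix.trace_sum] at h
    simp only [Matrix.trace_smul, smul_eq_mul, (fun i => (hO i).2.2 (Matrix.single i0 i0 1)),
      Matrix.trace_single_eq_same, mul_one] at h
    exact h
  have h2 : (1:ℝ) = ∑ i, η i := by
    have := h1
    push_cast at this
    exact_mod_cast this
  calc (1:ℝ) = |∑ i, η i| := by rw [← h2]; simp
    _ ≤ ∑ i, |η i| := Finset.abs_sum_le_sum_abs _ _

lemma zero_mem_decompCosts_of_dim_zero
    {L : Matrix (Fin 0) (Fin 0) ℂ → Matrix (Fin 0) (Fin 0) ℂ} :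
    (0:ℝ) ∈ decompCosts L := by
  refine ⟨0, Fin.elim0, Fin.elim0, fun i => i.elim0, fun X => ?_, by simp⟩
  ext i j
  exact i.elim0

open NuAux in
lemma decompCosts_nonempty {d : ℕ} (hd : 0 < d)
    (M : Matrix (Fin d) (Fin d) ℂ → Matrix (Fin d) (Fin d) ℂ)
    (hlin : IsLinearMap ℂ M) (hHP : IsHP M) (hTP : IsTP M) :
    (decompCosts M).Nonempty := by
  obtain ⟨C, hC0, hpsd⟩ := exists_shift (choiMatrix_isHermitian hlin hHP)
  have hdR : (0:ℝ) < (d:ℝ) := by exact_mod_cast hd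
  have hdC : ((d:ℝ):ℂ) ≠ 0 := by exact_mod_cast hdR.ne'
  set c : ℝ := 1 + C * d with hc
  have hc0 : 0 < c := by nlinarith
  have hcC : ((c:ℝ):ℂ) ≠ 0 := by exact_mod_cast hc0.ne'
  set O₀ : Matrix (Fin d) (Fin d) ℂ → Matrix (Fin d) (Fin d) ℂ :=
    mapOfChoi (((c⁻¹ : ℝ) : ℂ) • (choiMatrix M + (C:ℂ) • 1)) with hO₀
  set O₁ : Matrix (Fin d) (Fin d) ℂ → Matrix (Fin d) (Fin d) ℂ :=
    mapOfChoi ((((d:ℝ)⁻¹ : ℝ) : ℂ) • (1 : Matrix (Fin d × Fin d) (Fin d × Fin d) ℂ)) with hO₁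
  refine ⟨∑ i : Fin 2, |(![c, -(C * d)]) i|, 2, ![c, -(C * d)], ![O₀, O₁], ?_, ?_, rfl⟩
  · intro i
    fin_cases i
    · refine ⟨isLinearMap_mapOfChoi _, isCP_mapOfChoi (posSemidef_ofReal_smul hpsd
        (inv_nonneg.mpr hc0.le)), ?_⟩
      intro X
      show (mapOfChoi (((c⁻¹ : ℝ) : ℂ) • (choiMatrix M + (C:ℂ) • 1)) X).trace = X.trace
      rw [mapOfChoi_smul_left, Matrix.trace_smul, mapOfChoi_add_left, Matrix.trace_add,
        trace_mapOfChoi_choiMatrix hTP, mapOfChoi_smul_left, Matrix.trace_smul,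
        trace_mapOfChoi_one]
      have hcc : ((c⁻¹:ℝ):ℂ) * ((1:ℂ) + (C:ℂ) * (d:ℂ)) = 1 := by
        rw [hc]
        push_cast
        field_simp
      simp only [smul_eq_mul]
      linear_combination X.trace * hcc
    · refine ⟨isLinearMap_mapOfChoi _, isCP_mapOfChoi (posSemidef_ofReal_smul
        Matrix.PosSemidef.one (inv_nonneg.mpr hdR.le)), ?_⟩
      intro X
      show (mapOfChoi ((((d:ℝ)⁻¹ : ℝ) : ℂ) • (1 : Matrix (Fin d × Fin d) (Fin d × Fin d) ℂ)) X).trace = X.trace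
      rw [mapOfChoi_smul_left, Matrix.trace_smul, trace_mapOfChoi_one]
      have hdd : (((d:ℝ)⁻¹:ℝ):ℂ) * (d:ℂ) = 1 := by
        push_cast
        field_simp
      simp only [smul_eq_mul]
      linear_combination X.trace * hdd
  · intro X
    rw [Fin.sum_univ_two]
    simp only [Matrix.cons_val_zero, Matrix.cons_val_one, Matrix.head_cons]
    rw [hO₀, hO₁, mapOfChoi_smul_left, mapOfChoi_smul_left, mapOfChoi_add_left,
      mapOfChoi_smul_left, mapOfChoi_choiMatrix hlin, smul_smul, smul_smul]
    have h1 : ((c:ℝ):ℂ) * ((c⁻¹:ℝ):ℂ) = 1 := by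
      push_cast
      field_simp
    have h2 : ((-(C*d):ℝ):ℂ) * (((d:ℝ)⁻¹:ℝ):ℂ) = -(C:ℂ) := by
      push_cast
      field_simp
    rw [h1, one_smul, h2]
    module

open NuAux in
lemma mul_mem_decompCosts {d : ℕ}
    {M N : Matrix (Fin d) (Fin d) ℂ → Matrix (Fin d) (Fin d) ℂ}
    (hMlin : IsLinearMap ℂ M) {c₁ c₂ : ℝ}
    (h₁ : c₁ ∈ decompCosts M) (h₂ : c₂ ∈ decompCosts N) :
    c₁ * c₂ ∈ decompCosts (M ∘ N) := by
  obtain ⟨s, η, O, hO, hrep₁, rfl⟩ := h₁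
  obtain ⟨t, ξ, P, hP, hrep₂, rfl⟩ := h₂
  refine ⟨s * t, fun k => η (finProdFinEquiv.symm k).1 * ξ (finProdFinEquiv.symm k).2,
    fun k => O (finProdFinEquiv.symm k).1 ∘ P (finProdFinEquiv.symm k).2,
    fun k => (hO _).comp (hP _), ?_, ?_⟩
  · intro X
    rw [← Equiv.sum_comp finProdFinEquiv
      (fun k => ((η (finProdFinEquiv.symm k).1 * ξ (finProdFinEquiv.symm k).2 : ℝ) : ℂ) •
        (O (finProdFinEquiv.symm k).1 ∘ P (finProdFinEquiv.symm k).2) X)]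
    simp only [Equiv.symm_apply_apply]
    rw [Fintype.sum_prod_type]
    have expand : (M ∘ N) X = ∑ j, (ξ j : ℂ) • M (P j X) := by
      show M (N X) = _
      rw [hrep₂ X]
      rw [show M (∑ i, (ξ i : ℂ) • P i X) = (IsLinearMap.mk' M hMlin) (∑ i, (ξ i : ℂ) • P i X)
        from rfl, map_sum]
      exact Finset.sum_congr rfl fun j _ => by rw [_root_.map_smul]; rfl
    rw [expand, Finset.sum_comm]
    refine Finset.sum_congr rfl fun j _ => ?_
    rw [hrep₁ (P j X), Finset.smul_sum]
    refine Finset.sum_congr rfl fun i _ => ?_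
    push_cast
    rw [smul_smul, mul_comm]
    rfl
  · rw [Finset.sum_mul_sum, ← Equiv.sum_comp finProdFinEquiv
      (fun k => |η (finProdFinEquiv.symm k).1 * ξ (finProdFinEquiv.symm k).2|)]
    simp only [Equiv.symm_apply_apply]
    rw [Fintype.sum_prod_type]
    exact Finset.sum_congr rfl fun i _ => Finset.sum_congr rfl fun j _ => (abs_mul _ _).symm


/-- subadditivity w.r.t. composition: `ν(M ∘ N) ≤ ν(M) + ν(N)`. -/
theorem nu_comp_subadditive {d : ℕ}
    (M N : Matrix (Fin d) (Fin d) ℂ → Matrix (Fin d) (Fin d) ℂ)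
    (hMlin : IsLinearMap ℂ M) (hMHP : IsHP M) (hMTP : IsTP M)
    (hNlin : IsLinearMap ℂ N) (hNHP : IsHP N) (hNTP : IsTP N) :
    nu (M ∘ N) ≤ nu M + nu N := by
  rcases Nat.eq_zero_or_pos d with hd | hd
  · subst hd
    have h0 : ∀ L : Matrix (Fin 0) (Fin 0) ℂ → Matrix (Fin 0) (Fin 0) ℂ,
        sInf (decompCosts L) = 0 := fun L =>
      le_antisymm
        (csInf_le ⟨0, fun x hx => nonneg_of_mem_decompCosts hx⟩ zero_mem_decompCosts_of_dim_zero)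
        (le_csInf ⟨0, zero_mem_decompCosts_of_dim_zero⟩ fun x hx => nonneg_of_mem_decompCosts hx)
    simp [nu, h0, Real.logb_zero]
  · have hMN_TP : IsTP (M ∘ N) := by
      intro X
      show (M (N X)).trace = X.trace
      rw [hMTP, hNTP]
    have hneM : (decompCosts M).Nonempty := decompCosts_nonempty hd M hMlin hMHP hMTP
    have hneN : (decompCosts N).Nonempty := decompCosts_nonempty hd N hNlin hNHP hNTP
    have hbddMN : BddBelow (decompCosts (M ∘ N)) :=
      ⟨0, fun x hx => nonneg_of_mem_decompCosts hx⟩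
    obtain ⟨x₀, hx₀⟩ := hneM
    obtain ⟨y₀, hy₀⟩ := hneN
    have hneMN : (decompCosts (M ∘ N)).Nonempty :=
      ⟨x₀ * y₀, mul_mem_decompCosts hMlin hx₀ hy₀⟩
    have ha1 : 1 ≤ sInf (decompCosts M) :=
      le_csInf ⟨x₀, hx₀⟩ fun x hx => one_le_of_mem_decompCosts hd hMTP hx
    have hb1 : 1 ≤ sInf (decompCosts N) :=
      le_csInf ⟨y₀, hy₀⟩ fun x hx => one_le_of_mem_decompCosts hd hNTP hx
    have hc1 : 1 ≤ sInf (decompCosts (M ∘ N)) :=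
      le_csInf hneMN fun x hx => one_le_of_mem_decompCosts hd hMN_TP hx
    have ha0 : (0:ℝ) < sInf (decompCosts M) := lt_of_lt_of_le one_pos ha1
    have hb0 : (0:ℝ) < sInf (decompCosts N) := lt_of_lt_of_le one_pos hb1
    have hkey : sInf (decompCosts (M ∘ N)) ≤ sInf (decompCosts M) * sInf (decompCosts N) := by
      have step1 : ∀ y ∈ decompCosts N,
          sInf (decompCosts (M ∘ N)) ≤ sInf (decompCosts M) * y := by
        intro y hy
        have hy0 : (0:ℝ) < y := lt_of_lt_of_le one_pos (one_le_of_mem_decompCosts hd hNTP hy)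
        rw [← div_le_iff₀ hy0]
        exact le_csInf ⟨x₀, hx₀⟩ fun x hx =>
          (div_le_iff₀ hy0).mpr (csInf_le hbddMN (mul_mem_decompCosts hMlin hx hy))
      rw [← div_le_iff₀' ha0]
      exact le_csInf ⟨y₀, hy₀⟩ fun y hy => (div_le_iff₀' ha0).mpr (step1 y hy)
    show Real.logb 2 (sInf (decompCosts (M ∘ N))) ≤
      Real.logb 2 (sInf (decompCosts M)) + Real.logb 2 (sInf (decompCosts N))
    calc Real.logb 2 (sInf (decompCosts (M ∘ N)))
        ≤ Real.logb 2 (sInf (decompCosts M) * sInf (decompCosts N)) :=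
          Real.logb_le_logb_of_le one_lt_two (lt_of_lt_of_le one_pos hc1) hkey
      _ = _ := Real.logb_mul ha0.ne' hb0.ne'

end
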